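/- The minimum construction cost of the star K_{1,n} is ν_*(K_{1,n}) = (5n² + 11n)/6 for every n ≥ 3 divisible by 3, and a minimum-cost construction sequence places exactly b = ⌈n/3⌉ peripheral vertices before the hub. -/

import Mathlib

namespace ConsCost

variable {V : Type*} [Fintype V]

/-- The number of elements (vertices plus edges) of a graph. -/
noncomputable def numElts (G : SimpleGraph V) : ℕ :=
  Fintype.card V + Nat.card G.edgeSet

/-- `x` is a construction sequence for `G`: a bijective listing of the vertices and
edges of `G` in which every edge appears after both of its endpoints. -/
def IsCSeq (G : SimpleGraph V) (x : Fin (numElts G) ≃ V ⊕ G.edgeSet) : Prop :=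
  ∀ (e : G.edgeSet), ∀ v ∈ (e : Sym2 V), x.symm (Sum.inl v) < x.symm (Sum.inr e)

/-- The cost `ν(e,x) = (x⁻¹e − x⁻¹u) + (x⁻¹e − x⁻¹w)` of an edge `e = uw`
in the construction sequence `x`. -/
noncomputable def edgeCost (G : SimpleGraph V) (x : Fin (numElts G) ≃ V ⊕ G.edgeSet)
    (e : G.edgeSet) : ℕ :=
  2 * (x.symm (Sum.inr e) : ℕ) -
    Sym2.lift ⟨fun u w => ((x.symm (Sum.inl u) : ℕ) + (x.symm (Sum.inl w) : ℕ)),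
      fun u w => by dsimp only; omega⟩ (e : Sym2 V)

/-- The cost `ν(x)` of a construction sequence: the sum of the costs of all edges. -/
noncomputable def cost (G : SimpleGraph V) (x : Fin (numElts G) ≃ V ⊕ G.edgeSet) : ℕ :=
  ∑ᶠ e : G.edgeSet, edgeCost G x e

/-- The maximum construction cost `ν*(G)`. -/
noncomputable def maxCost (G : SimpleGraph V) : ℕ :=
  sSup {c | ∃ x, IsCSeq G x ∧ cost G x = c}

/-- The minimum construction cost `ν_*(G)`. -/
noncomputable def minCost (G : SimpleGraph V) : ℕ :=
  sInf {c | ∃ x, IsCSeq G x ∧ cost G x = c}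
/-- The star `K_{1,n}`: hub `0`, peripheral vertices `1, …, n`, and an edge from the
hub to each peripheral vertex. -/
def starGraph (n : ℕ) : SimpleGraph (Fin (n + 1)) :=
  SimpleGraph.fromRel (fun u _ => u = 0)

variable {n : ℕ}

lemma K1 (s : Finset ℕ) : ∑ i ∈ Finset.range s.card, i ≤ ∑ i ∈ s, i := by
  induction s using Finset.strongInduction with
  | _ s ih =>
    rcases s.eq_empty_or_nonempty with rfl | hne
    · simp
    · set m := s.max' hne with hm_def
      have hm : m ∈ s := s.max'_mem hne
      have hsub : s ⊆ Finset.range (m+1) := fun a ha =>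
        Finset.mem_range.2 (Nat.lt_succ_of_le (s.le_max' a ha))
      have hcard : s.card ≤ m + 1 := by
        simpa using Finset.card_le_card hsub
      have hE := ih (s.erase m) (Finset.erase_ssubset hm)
      have hce : (s.erase m).card = s.card - 1 := Finset.card_erase_of_mem hm
      have hpos : 1 ≤ s.card := Finset.card_pos.2 hne
      have hsq : s.card = (s.card - 1) + 1 := by omega
      rw [hsq, Finset.sum_range_succ, ← Finset.add_sum_erase _ _ hm]
      rw [hce] at hE
      omega

lemma K2 (s : Finset ℕ) (M : ℕ) (hs : ∀ i ∈ s, i ≤ M) :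
    ∑ i ∈ s, i + ∑ i ∈ Finset.range (M + 1 - s.card), i ≤ ∑ i ∈ Finset.range (M+1), i := by
  have hsub : s ⊆ Finset.range (M+1) := fun a ha => Finset.mem_range.2 (by
    have := hs a ha; omega)
  have h1 : ∑ i ∈ Finset.range (M+1) \ s, i + ∑ i ∈ s, i = ∑ i ∈ Finset.range (M+1), i :=
    Finset.sum_sdiff (f := fun i => i) hsub
  have h2 := K1 (Finset.range (M+1) \ s)
  have h3 : (Finset.range (M+1) \ s).card = M + 1 - s.card := by
    rw [Finset.card_sdiff_of_subset hsub, Finset.card_range]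
  rw [h3] at h2
  omega

variable {n : ℕ}

lemma star_adj (u w : Fin (n+1)) : (starGraph n).Adj u w ↔ u ≠ w ∧ (u = 0 ∨ w = 0) := by
  simp [starGraph, SimpleGraph.fromRel_adj]

def starEdge (v : Fin (n+1)) (hv : v ≠ 0) : (starGraph n).edgeSet :=
  ⟨s(0, v), by rw [SimpleGraph.mem_edgeSet, star_adj]; exact ⟨Ne.symm hv, Or.inl rfl⟩⟩

lemma starEdge_inj {v w : Fin (n+1)} {hv : v ≠ 0} {hw : w ≠ 0}
    (h : starEdge v hv = starEdge w hw) : v = w := by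
  have : (s(0, v) : Sym2 (Fin (n+1))) = s(0, w) := congrArg Subtype.val h
  replace this := (Sym2.mk_eq_mk_iff (p := ((0 : Fin (n+1)), v)) (q := ((0 : Fin (n+1)), w))).1 this
  rcases this with h | h
  · exact (Prod.mk.injEq _ _ _ _ ▸ h).2
  · have h1 : v = 0 := by simpa using congrArg Prod.snd h
    exact absurd h1 hv

lemma starEdge_surj (e : (starGraph n).edgeSet) : ∃ v : Fin (n+1), ∃ hv : v ≠ 0,
    starEdge v hv = e := by
  obtain ⟨s, hs⟩ := e
  induction s with
  | _ u w =>
    rw [SimpleGraph.mem_edgeSet, star_adj] at hs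
    obtain ⟨hne, h0⟩ := hs
    rcases h0 with rfl | rfl
    · exact ⟨w, Ne.symm hne, rfl⟩
    · exact ⟨u, hne, by simp [starEdge, Sym2.eq_swap]⟩

noncomputable def starEquiv : {v : Fin (n+1) // v ≠ 0} ≃ (starGraph n).edgeSet :=
  Equiv.ofBijective (fun p => starEdge p.1 p.2)
    ⟨fun a b h => Subtype.ext (starEdge_inj h),
     fun e => by obtain ⟨v, hv, h⟩ := starEdge_surj e; exact ⟨⟨v, hv⟩, h⟩⟩

noncomputable instance : Fintype (starGraph n).edgeSet := Fintype.ofEquiv _ starEquiv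

lemma card_starEdgeSet : Nat.card (starGraph n).edgeSet = n := by
  rw [← Nat.card_congr starEquiv, Nat.card_eq_fintype_card, Fintype.card_subtype_compl,
    Fintype.card_fin, Fintype.card_subtype_eq]
  omega

lemma numElts_star : numElts (starGraph n) = 2 * n + 1 := by
  rw [numElts, card_starEdgeSet, Fintype.card_fin]; omega

lemma card_leafType : Fintype.card {v : Fin (n+1) // v ≠ 0} = n := by
  rw [Fintype.card_subtype_compl, Fintype.card_fin, Fintype.card_subtype_eq]; omega

lemma zero_mem_edge (e : (starGraph n).edgeSet) : (0 : Fin (n+1)) ∈ (e : Sym2 (Fin (n+1))) := by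
  obtain ⟨v, hv, rfl⟩ := starEdge_surj e
  simp [starEdge]

section Seq
variable (x : Fin (numElts (starGraph n)) ≃ Fin (n+1) ⊕ (starGraph n).edgeSet)

/-- position of an element -/
noncomputable def pos (a : Fin (n+1) ⊕ (starGraph n).edgeSet) : ℕ := (x.symm a : ℕ)

noncomputable def hub : ℕ := pos x (Sum.inl 0)

noncomputable def leafSum : ℕ := ∑ p : {v : Fin (n+1) // v ≠ 0}, pos x (Sum.inl p.1)

lemma edgeCost_eq (hx : IsCSeq (starGraph n) x) (v : Fin (n+1)) (hv : v ≠ 0) :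
    edgeCost (starGraph n) x (starEdge v hv) + hub x + pos x (Sum.inl v)
      = 2 * pos x (Sum.inr (starEdge v hv)) := by
  have h0 : pos x (Sum.inl 0) < pos x (Sum.inr (starEdge v hv)) :=
    hx (starEdge v hv) 0 (zero_mem_edge _)
  have h1 : pos x (Sum.inl v) < pos x (Sum.inr (starEdge v hv)) := by
    refine hx (starEdge v hv) v ?_
    simp [starEdge]
  have hl : Sym2.lift ⟨fun u w => ((x.symm (Sum.inl u) : ℕ) + (x.symm (Sum.inl w) : ℕ)),
      fun u w => by dsimp only; omega⟩ ((starEdge v hv : (starGraph n).edgeSet) : Sym2 (Fin (n+1)))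
      = hub x + pos x (Sum.inl v) := by
    show Sym2.lift _ (s(0,v) : Sym2 (Fin (n+1))) = _
    rw [Sym2.lift_mk]
    rfl
  unfold edgeCost
  rw [hl]
  unfold hub pos at *
  omega

noncomputable def edgeSum : ℕ := ∑ e : (starGraph n).edgeSet, pos x (Sum.inr e)

lemma edgeSum_eq : edgeSum x = ∑ p : {v : Fin (n+1) // v ≠ 0}, pos x (Sum.inr (starEdge p.1 p.2)) :=
  (Equiv.sum_comp starEquiv (fun e => pos x (Sum.inr e))).symm

lemma total_eq : 2 * (hub x + leafSum x + edgeSum x) = (2 * n + 1) * (2 * n) := by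
  classical
  have h1 : ∑ a : Fin (n+1) ⊕ (starGraph n).edgeSet, pos x a
      = hub x + leafSum x + edgeSum x := by
    rw [Fintype.sum_sum_type]
    congr 1
    rw [← Finset.add_sum_erase _ _ (Finset.mem_univ (0 : Fin (n+1)))]
    congr 1
    exact Finset.sum_subtype _ (by simp) (fun v => pos x (Sum.inl v))
  have h2 : ∑ a : Fin (n+1) ⊕ (starGraph n).edgeSet, pos x a
      = ∑ i ∈ Finset.range (numElts (starGraph n)), i := by
    rw [← Equiv.sum_comp x (pos x), ← Fin.sum_univ_eq_sum_range (fun i => i) (numElts (starGraph n))]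
    refine Finset.sum_congr rfl (fun i _ => ?_)
    simp [pos]
  have h3 := Finset.sum_range_id_mul_two (numElts (starGraph n))
  rw [numElts_star] at h3
  rw [numElts_star] at h2
  rw [h1] at h2
  have h4 : (2*n+1) - 1 = 2*n := by omega
  rw [h4] at h3
  omega

lemma key_identity (hx : IsCSeq (starGraph n) x) :
    cost (starGraph n) x + (n + 2) * hub x + 3 * leafSum x = 2 * n * (2 * n + 1) := by
  classical
  have hc : cost (starGraph n) x
      = ∑ p : {v : Fin (n+1) // v ≠ 0}, edgeCost (starGraph n) x (starEdge p.1 p.2) := by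
    rw [cost, finsum_eq_sum_of_fintype]
    exact (Equiv.sum_comp starEquiv (edgeCost (starGraph n) x)).symm
  have ht : ∑ p : {v : Fin (n+1) // v ≠ 0},
        (edgeCost (starGraph n) x (starEdge p.1 p.2) + hub x + pos x (Sum.inl p.1))
      = ∑ p : {v : Fin (n+1) // v ≠ 0}, 2 * pos x (Sum.inr (starEdge p.1 p.2)) :=
    Finset.sum_congr rfl (fun p _ => edgeCost_eq x hx p.1 p.2)
  simp only [Finset.sum_add_distrib, Finset.sum_const, Finset.card_univ, card_leafType,
    smul_eq_mul, ← Finset.mul_sum] at ht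
  rw [← edgeSum_eq, ← hc, ← leafSum] at ht
  have h2 := total_eq x
  nlinarith [ht, h2]

open scoped Classical in
/-- leaves placed before the hub -/
noncomputable def beforeSet : Finset (Fin (n+1)) :=
  (Finset.univ.erase 0).filter (fun v => pos x (Sum.inl v) < hub x)

open scoped Classical in
/-- leaves placed after the hub -/
noncomputable def afterSet : Finset (Fin (n+1)) :=
  (Finset.univ.erase 0).filter (fun v => ¬ pos x (Sum.inl v) < hub x)

lemma pos_inj {a b : Fin (n+1) ⊕ (starGraph n).edgeSet} (h : pos x a = pos x b) : a = b :=
  x.symm.injective (Fin.ext h)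

lemma pos_lt (a : Fin (n+1) ⊕ (starGraph n).edgeSet) : pos x a < 2 * n + 1 :=
  lt_of_lt_of_eq (x.symm a).isLt numElts_star

lemma before_data (hx : IsCSeq (starGraph n) x) :
    (beforeSet x).card = hub x ∧
      ∑ v ∈ beforeSet x, pos x (Sum.inl v) = ∑ i ∈ Finset.range (hub x), i := by
  classical
  have hmem : ∀ v (hv : v ∈ beforeSet x), pos x (Sum.inl v) ∈ Finset.range (hub x) := by
    intro v hv
    simp only [beforeSet, Finset.mem_filter] at hv
    exact Finset.mem_range.2 hv.2
  have hinj : ∀ v (hv : v ∈ beforeSet x) w (hw : w ∈ beforeSet x),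
      pos x (Sum.inl v) = pos x (Sum.inl w) → v = w := by
    intro v _ w _ h
    exact Sum.inl.inj (pos_inj x h)
  have hsurj : ∀ j ∈ Finset.range (hub x), ∃ v, ∃ hv : v ∈ beforeSet x, pos x (Sum.inl v) = j := by
    intro j hj
    rw [Finset.mem_range] at hj
    have hjlt : j < numElts (starGraph n) := by
      have h1 : hub x < 2*n+1 := pos_lt x (Sum.inl 0)
      rw [numElts_star]
      omega
    rcases haa : x ⟨j, hjlt⟩ with v | e
    · have hpa : pos x (Sum.inl v) = j := by
        rw [pos, ← haa, Equiv.symm_apply_apply]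
      have hv0 : v ≠ 0 := by
        rintro rfl
        have h2 : hub x = j := hpa
        omega
      refine ⟨v, ?_, hpa⟩
      simp only [beforeSet, Finset.mem_filter, Finset.mem_erase, Finset.mem_univ, and_true]
      exact ⟨hv0, by rw [hpa]; exact hj⟩
    · exfalso
      have h2 : x.symm (Sum.inl 0) < x.symm (Sum.inr e) := hx e 0 (zero_mem_edge e)
      have h3 : pos x (Sum.inr e) = j := by
        rw [pos, ← haa, Equiv.symm_apply_apply]
      have h4 : hub x < pos x (Sum.inr e) := h2
      omega
  constructor
  · have := Finset.card_bij (fun v _ => pos x (Sum.inl v)) hmem hinj hsurj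
    rwa [Finset.card_range] at this
  · exact Finset.sum_bij (fun v _ => pos x (Sum.inl v)) hmem hinj hsurj (fun _ _ => rfl)

lemma card_split : (beforeSet x).card + (afterSet x).card = n := by
  classical
  rw [beforeSet, afterSet]
  rw [Finset.card_filter_add_card_filter_not]
  rw [Finset.card_erase_of_mem (Finset.mem_univ 0), Finset.card_univ, Fintype.card_fin]
  omega

lemma leafSum_split : leafSum x = ∑ v ∈ beforeSet x, pos x (Sum.inl v)
    + ∑ v ∈ afterSet x, pos x (Sum.inl v) := by
  classical
  rw [leafSum, ← Finset.sum_subtype (Finset.univ.erase 0) (by simp)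
    (fun v => pos x (Sum.inl v))]
  rw [beforeSet, afterSet]
  exact (Finset.sum_filter_add_sum_filter_not _ _ _).symm

open scoped Classical in
noncomputable def eposd (v : Fin (n+1)) : ℕ :=
  if hv : v ≠ 0 then pos x (Sum.inr (starEdge v hv)) else 0

lemma eposd_eq (v : Fin (n+1)) (hv : v ≠ 0) :
    eposd x v = pos x (Sum.inr (starEdge v hv)) := dif_pos hv

lemma after_bound (hx : IsCSeq (starGraph n) x) :
    (∑ v ∈ afterSet x, pos x (Sum.inl v)) + (afterSet x).card * (afterSet x).card
      ≤ 2 * n * (afterSet x).card := by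
  classical
  have hv0 : ∀ v ∈ afterSet x, v ≠ 0 := by
    intro v hv
    simp only [afterSet, Finset.mem_filter, Finset.mem_erase] at hv
    exact hv.1.1
  have hlt : ∀ v ∈ afterSet x, pos x (Sum.inl v) + 1 ≤ eposd x v := by
    intro v hv
    rw [eposd_eq x v (hv0 v hv)]
    have : pos x (Sum.inl v) < pos x (Sum.inr (starEdge v (hv0 v hv))) := by
      refine hx (starEdge v (hv0 v hv)) v ?_
      simp [starEdge]
    omega
  have hinj1 : Set.InjOn (fun v => pos x (Sum.inl v)) (afterSet x) := by
    intro v _ w _ h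
    exact Sum.inl.inj (pos_inj x h)
  have hinj2 : Set.InjOn (eposd x) (afterSet x) := by
    intro v hv w hw h
    rw [eposd_eq x v (hv0 v hv), eposd_eq x w (hv0 w hw)] at h
    exact starEdge_inj (Sum.inr.inj (pos_inj x h))
  have hdisj : Disjoint ((afterSet x).image (fun v => pos x (Sum.inl v)))
      ((afterSet x).image (eposd x)) := by
    rw [Finset.disjoint_left]
    intro j h1 h2
    obtain ⟨v, hv, hvj⟩ := Finset.mem_image.1 h1
    obtain ⟨w, hw, hwj⟩ := Finset.mem_image.1 h2
    rw [eposd_eq x w (hv0 w hw)] at hwj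
    have : Sum.inl v = Sum.inr (starEdge w (hv0 w hw)) := pos_inj x (by rw [hvj, hwj])
    exact Sum.inl_ne_inr this
  set m := (afterSet x).card with hm
  set Sa := ∑ v ∈ afterSet x, pos x (Sum.inl v) with hSa
  set s : Finset ℕ := (afterSet x).image (fun v => pos x (Sum.inl v))
      ∪ (afterSet x).image (eposd x) with hs
  have hcards : s.card = 2 * m := by
    rw [hs, Finset.card_union_of_disjoint hdisj,
      Finset.card_image_of_injOn hinj1, Finset.card_image_of_injOn hinj2]
    omega
  have hsums : ∑ i ∈ s, i = Sa + ∑ v ∈ afterSet x, eposd x v := by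
    rw [hs, Finset.sum_union hdisj, Finset.sum_image hinj1, Finset.sum_image hinj2]
  have hse : Sa + m ≤ ∑ v ∈ afterSet x, eposd x v := by
    calc Sa + m = ∑ v ∈ afterSet x, (pos x (Sum.inl v) + 1) := by
          rw [Finset.sum_add_distrib, Finset.sum_const, smul_eq_mul, mul_one, hSa, hm]
      _ ≤ _ := Finset.sum_le_sum hlt
  have hbd : ∀ i ∈ s, i ≤ 2 * n := by
    intro i hi
    rw [hs, Finset.mem_union] at hi
    rcases hi with hi | hi <;> obtain ⟨v, hv, rfl⟩ := Finset.mem_image.1 hi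
    · have := pos_lt x (Sum.inl v); omega
    · rw [eposd_eq x v (hv0 v hv)]
      have := pos_lt x (Sum.inr (starEdge v (hv0 v hv))); omega
  have hmn : m ≤ n := by have := card_split x; omega
  have hK := K2 s (2*n) hbd
  rw [hcards, hsums] at hK
  have g1 := Finset.sum_range_id_mul_two (2*n+1)
  have g2 := Finset.sum_range_id_mul_two (2*n+1 - 2*m)
  rw [show 2*n+1-1 = 2*n from by omega] at g1
  rw [show 2*n+1-2*m-1 = 2*n-2*m from by omega] at g2
  set A := ∑ i ∈ Finset.range (2*n+1), i
  set B := ∑ i ∈ Finset.range (2*n+1 - 2*m), i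
  set Se := ∑ v ∈ afterSet x, eposd x v
  have h2m : 2*m ≤ 2*n := by omega
  zify [h2m, show 2*m ≤ 2*n+1 by omega] at g1 g2 hK hse ⊢
  nlinarith [g1, g2, hK, hse]

end Seq

-- auxiliary integer lemmas
lemma int_aux (a b : ℤ) : 0 ≤ 3*(a-b)^2 + (a-b) := by
  rcases le_or_gt b a with h | h
  · nlinarith
  · nlinarith

lemma int_aux2 (a b : ℤ) (hne : a ≠ b) : 1 ≤ 3*(a-b)^2 + (a-b) := by
  rcases lt_or_gt_of_ne hne with h | h
  · nlinarith
  · nlinarith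

lemma gauss (k : ℕ) : 2 * (∑ i ∈ Finset.range k, i) + k = k * k := by
  have := Finset.sum_range_id_mul_two k
  cases k with
  | zero => simp
  | succ s =>
    rw [Nat.succ_sub_one] at this
    nlinarith [this]

section Lower
variable (x : Fin (numElts (starGraph n)) ≃ Fin (n+1) ⊕ (starGraph n).edgeSet)

lemma cost_lower (hx : IsCSeq (starGraph n) x) (t : ℕ) (hnt : n = 3*t) :
    15*t*t + 11*t ≤ 2 * cost (starGraph n) x ∧
      (hub x ≠ t → 15*t*t + 11*t < 2 * cost (starGraph n) x) := by
  obtain ⟨hbc, hbs⟩ := before_data x hx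
  have hcs := card_split x
  have hls := leafSum_split x
  have hab := after_bound x hx
  have hki := key_identity x hx
  have hg := gauss (hub x)
  rw [hbs] at hls
  -- cast to ℤ
  set h := hub x
  set m := (afterSet x).card
  set Sa := ∑ v ∈ afterSet x, pos x (Sum.inl v)
  set S := leafSum x
  set C := cost (starGraph n) x
  rw [hbc] at hcs
  have hnZ : (n : ℤ) = 3 * t := by exact_mod_cast congrArg (Nat.cast (R := ℤ)) hnt
  have hmZ : (m : ℤ) = 3*t - h := by
    have h1 : h + m = n := hcs
    omega
  have f2 : 2 * ((∑ i ∈ Finset.range h, i : ℕ) : ℤ) + h = h * h := by exact_mod_cast hg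
  have f3 : (Sa : ℤ) + (3*(t:ℤ) - h) * (3*t - h) ≤ 2 * (3*(t:ℤ)) * (3*t - h) := by
    have h1 : (Sa : ℤ) + (m:ℤ) * m ≤ 2 * (n:ℤ) * m := by exact_mod_cast hab
    rw [hmZ, hnZ] at h1
    exact h1
  have f4 : (S : ℤ) = (∑ i ∈ Finset.range h, i : ℕ) + Sa := by exact_mod_cast hls
  have f5 : (C:ℤ) + (3*(t:ℤ)+2) * h + 3 * S = 2*(3*(t:ℤ))*(2*(3*t)+1) := by
    have h1 : (C : ℤ) + ((n:ℤ)+2) * h + 3 * S = 2*(n:ℤ)*(2*n+1) := by exact_mod_cast hki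
    rw [hnZ] at h1
    exact h1
  constructor
  · have haux := int_aux (t : ℤ) (h : ℤ)
    have : (15*(t:ℤ)*t + 11*t) ≤ 2 * C := by nlinarith [haux, f2, f3, f4, f5]
    exact_mod_cast this
  · intro hne
    have hneZ : (t : ℤ) ≠ (h : ℤ) := by
      intro hh
      exact hne (by exact_mod_cast hh.symm)
    have haux := int_aux2 (t : ℤ) (h : ℤ) hneZ
    have : (15*(t:ℤ)*t + 11*t) < 2 * C := by nlinarith [haux, f2, f3, f4, f5]
    exact_mod_cast this

end Lower

section Upper

/-- target position of vertex `k` -/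
def gQ (t k : ℕ) : ℕ := if k = 0 then t else if k ≤ t then k - 1 else 2*k - 1
/-- target position of the edge at leaf `k` -/
def hQ (t k : ℕ) : ℕ := if k ≤ t then t + k else 2*k

lemma val_ne_zero {v : Fin (n+1)} (hv : v ≠ 0) : (v : ℕ) ≠ 0 :=
  fun h => hv (Fin.ext (by simpa using h))

variable (t : ℕ)

noncomputable def Qfun :
    Fin (3*t+1) ⊕ (starGraph (3*t)).edgeSet → ℕ
  | Sum.inl v => gQ t v.val
  | Sum.inr e => hQ t (((starEquiv.symm e : {v : Fin (3*t+1) // v ≠ 0}) : Fin (3*t+1)) : ℕ)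

lemma Qfun_lt (a : Fin (3*t+1) ⊕ (starGraph (3*t)).edgeSet) :
    Qfun t a < numElts (starGraph (3*t)) := by
  rw [numElts_star]
  cases a with
  | inl v =>
    have := v.isLt
    simp only [Qfun, gQ]
    split_ifs <;> omega
  | inr e =>
    have h1 := ((starEquiv.symm e : {v : Fin (3*t+1) // v ≠ 0}) : Fin (3*t+1)).isLt
    have h2 := val_ne_zero (starEquiv.symm e).2
    simp only [Qfun, hQ]
    split_ifs <;> omega

noncomputable def Pfun :
    Fin (3*t+1) ⊕ (starGraph (3*t)).edgeSet → Fin (numElts (starGraph (3*t))) :=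
  fun a => ⟨Qfun t a, Qfun_lt t a⟩

lemma Pfun_bij : Function.Bijective (Pfun t) := by
  classical
  have hinj : Function.Injective (Pfun t) := by
    intro a b h
    have h' : Qfun t a = Qfun t b := congrArg Fin.val h
    cases a with
    | inl v =>
      cases b with
      | inl w =>
        have hv := v.isLt
        have hw := w.isLt
        simp only [Qfun, gQ] at h'
        have : (v : ℕ) = (w : ℕ) := by split_ifs at h' <;> omega
        exact congrArg Sum.inl (Fin.ext this)
      | inr e =>
        exfalso
        have h1 := ((starEquiv.symm e : {v : Fin (3*t+1) // v ≠ 0}) : Fin (3*t+1)).isLt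
        have h2 := val_ne_zero (starEquiv.symm e).2
        have hv := v.isLt
        simp only [Qfun, gQ, hQ] at h'
        split_ifs at h' <;> omega
    | inr e =>
      cases b with
      | inl w =>
        exfalso
        have h1 := ((starEquiv.symm e : {v : Fin (3*t+1) // v ≠ 0}) : Fin (3*t+1)).isLt
        have h2 := val_ne_zero (starEquiv.symm e).2
        have hw := w.isLt
        simp only [Qfun, gQ, hQ] at h'
        split_ifs at h' <;> omega
      | inr f =>
        have h1 := ((starEquiv.symm e : {v : Fin (3*t+1) // v ≠ 0}) : Fin (3*t+1)).isLt
        have h2 := val_ne_zero (starEquiv.symm e).2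
        have h3 := ((starEquiv.symm f : {v : Fin (3*t+1) // v ≠ 0}) : Fin (3*t+1)).isLt
        have h4 := val_ne_zero (starEquiv.symm f).2
        simp only [Qfun, hQ] at h'
        have hval : (((starEquiv.symm e : {v : Fin (3*t+1) // v ≠ 0}) : Fin (3*t+1)) : ℕ)
            = (((starEquiv.symm f : {v : Fin (3*t+1) // v ≠ 0}) : Fin (3*t+1)) : ℕ) := by
          split_ifs at h' <;> omega
        have : starEquiv.symm e = starEquiv.symm f := Subtype.ext (Fin.ext hval)
        exact congrArg Sum.inr (starEquiv.symm.injective this)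
  refine (Fintype.bijective_iff_injective_and_card _).2 ⟨hinj, ?_⟩
  rw [Fintype.card_sum, Fintype.card_fin, Fintype.card_fin, numElts_star,
    Fintype.card_congr starEquiv.symm, card_leafType]
  omega

noncomputable def xopt :
    Fin (numElts (starGraph (3*t))) ≃ Fin (3*t+1) ⊕ (starGraph (3*t)).edgeSet :=
  (Equiv.ofBijective (Pfun t) (Pfun_bij t)).symm

lemma xopt_pos (a : Fin (3*t+1) ⊕ (starGraph (3*t)).edgeSet) :
    pos (xopt t) a = Qfun t a := rfl

lemma starEquiv_symm_starEdge (w : Fin (n+1)) (hw : w ≠ 0) :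
    starEquiv.symm (starEdge w hw) = ⟨w, hw⟩ := by
  rw [Equiv.symm_apply_eq]
  rfl

lemma xopt_isCSeq : IsCSeq (starGraph (3*t)) (xopt t) := by
  intro e v hv
  obtain ⟨w, hw, rfl⟩ := starEdge_surj e
  have hmem : v = 0 ∨ v = w := by
    have : v ∈ (s(0, w) : Sym2 (Fin (3*t+1))) := hv
    rwa [Sym2.mem_iff] at this
  rw [Fin.lt_def]
  show pos (xopt t) (Sum.inl v) < pos (xopt t) (Sum.inr (starEdge w hw))
  rw [xopt_pos, xopt_pos]
  have hw1 := val_ne_zero hw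
  have hw2 := w.isLt
  simp only [Qfun, starEquiv_symm_starEdge, gQ, hQ]
  rcases hmem with rfl | rfl
  · simp only [Fin.val_zero]
    split_ifs <;> omega
  · split_ifs <;> omega

lemma hub_xopt : hub (xopt t) = t := by
  show pos (xopt t) (Sum.inl 0) = t
  rw [xopt_pos]
  simp [Qfun, gQ]

lemma gauss_sum_gQ : 2 * (∑ k ∈ Finset.range (3*t+1), gQ t k) = 17*t*t + t := by
  have hsplit : ∑ k ∈ Finset.range (t+1), gQ t k
      + ∑ k ∈ Finset.Ico (t+1) (3*t+1), gQ t k = ∑ k ∈ Finset.range (3*t+1), gQ t k := by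
    simp only [Finset.range_eq_Ico]
    exact Finset.sum_Ico_consecutive _ (by omega) (by omega)
  have h1 : ∑ k ∈ Finset.range (t+1), gQ t k = (∑ i ∈ Finset.range t, i) + t := by
    rw [Finset.sum_range_succ']
    have hc : ∀ k ∈ Finset.range t, gQ t (k+1) = k := by
      intro k hk
      have := Finset.mem_range.1 hk
      simp only [gQ]
      split_ifs <;> first | contradiction | omega
    rw [Finset.sum_congr rfl hc]
    simp [gQ]
  have h2 : ∑ k ∈ Finset.Ico (t+1) (3*t+1), gQ t k
      = 2*t*(2*t+1) + 2 * ∑ i ∈ Finset.range (2*t), i := by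
    rw [Finset.sum_Ico_eq_sum_range, show 3*t+1 - (t+1) = 2*t from by omega]
    have hcg : ∀ i ∈ Finset.range (2*t), gQ t (t+1+i) = (2*t+1) + 2*i := by
      intro i hi
      simp only [gQ]
      split_ifs <;> omega
    rw [Finset.sum_congr rfl hcg, Finset.sum_add_distrib, Finset.sum_const, Finset.card_range,
      smul_eq_mul, ← Finset.mul_sum]
  have ga := gauss t
  have gb := gauss (2*t)
  nlinarith [hsplit, h1, h2, ga, gb]

lemma leafSum_xopt : 2 * leafSum (xopt t) + t = 17*t*t := by
  classical
  have h1 : gQ t ((0 : Fin (3*t+1)) : ℕ) + leafSum (xopt t)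
      = ∑ v : Fin (3*t+1), gQ t (v : ℕ) := by
    rw [← Finset.add_sum_erase _ _ (Finset.mem_univ (0 : Fin (3*t+1)))]
    congr 1
    rw [leafSum, ← Finset.sum_subtype (Finset.univ.erase 0) (by simp)
      (fun v => pos (xopt t) (Sum.inl v))]
    exact Finset.sum_congr rfl (fun v _ => by rw [xopt_pos]; simp [Qfun])
  have h2 : ∑ v : Fin (3*t+1), gQ t (v : ℕ) = ∑ k ∈ Finset.range (3*t+1), gQ t k :=
    Fin.sum_univ_eq_sum_range _ _
  have h3 := gauss_sum_gQ t
  have h0 : gQ t ((0 : Fin (3*t+1)) : ℕ) = t := by simp [gQ]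
  rw [h0, h2] at h1
  omega

lemma cost_xopt : 2 * cost (starGraph (3*t)) (xopt t) = 15*t*t + 11*t := by
  have hki := key_identity (xopt t) (xopt_isCSeq t)
  have hls := leafSum_xopt t
  have hhub := hub_xopt t
  rw [hhub] at hki
  have h1 : (cost (starGraph (3*t)) (xopt t) : ℤ) + (3*(t:ℤ)+2) * t + 3 * leafSum (xopt t)
      = 2*(3*(t:ℤ))*(2*(3*t)+1) := by exact_mod_cast hki
  have h2 : 2 * (leafSum (xopt t) : ℤ) + t = 17*(t:ℤ)*t := by exact_mod_cast hls
  have : 2 * (cost (starGraph (3*t)) (xopt t) : ℤ) = 15*(t:ℤ)*t + 11*t := by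
    nlinarith [h1, h2]
  exact_mod_cast this

end Upper

/-- For `n ≥ 3` divisible by `3`, `ν_*(K_{1,n}) = (5n² + 11n)/6`, and every
minimum-cost construction sequence places exactly `⌈n/3⌉ = n/3` peripheral vertices
before the hub. -/
theorem minCost_star (n : ℕ) (hn : 3 ≤ n) (hdvd : 3 ∣ n) :
    6 * minCost (starGraph n) = 5 * n ^ 2 + 11 * n ∧
      ∀ (x : Fin (numElts (starGraph n)) ≃ Fin (n + 1) ⊕ (starGraph n).edgeSet),
        IsCSeq (starGraph n) x → cost (starGraph n) x = minCost (starGraph n) →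
          Nat.card {v : Fin (n + 1) //
            v ≠ 0 ∧ x.symm (Sum.inl v) < x.symm (Sum.inl 0)} = n / 3 := by
  classical
  obtain ⟨t, hnt⟩ := hdvd
  subst hnt
  set c₀ := cost (starGraph (3*t)) (xopt t) with hc₀def
  have hc₀ : 2 * c₀ = 15*t*t + 11*t := cost_xopt t
  have hmem : c₀ ∈ {c | ∃ x, IsCSeq (starGraph (3*t)) x ∧ cost (starGraph (3*t)) x = c} :=
    ⟨xopt t, xopt_isCSeq t, rfl⟩
  have hlow : ∀ c ∈ {c | ∃ x, IsCSeq (starGraph (3*t)) x ∧ cost (starGraph (3*t)) x = c},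
      c₀ ≤ c := by
    rintro c ⟨x, hx, rfl⟩
    have := (cost_lower x hx t rfl).1
    omega
  have hmin : minCost (starGraph (3*t)) = c₀ :=
    le_antisymm (Nat.sInf_le hmem) (le_csInf ⟨c₀, hmem⟩ hlow)
  constructor
  · rw [hmin]
    nlinarith [hc₀]
  · intro x hx hcost
    rw [hmin] at hcost
    have hhub : hub x = t := by
      by_contra hne
      have hstrict := (cost_lower x hx t rfl).2 hne
      omega
    have hbc := (before_data x hx).1
    have hset : Finset.univ.filter
          (fun v : Fin (3*t+1) => v ≠ 0 ∧ x.symm (Sum.inl v) < x.symm (Sum.inl 0))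
        = beforeSet x := by
      ext v
      simp only [beforeSet, Finset.mem_filter, Finset.mem_erase, Finset.mem_univ, and_true,
        true_and]
      constructor
      · rintro ⟨h1, h2⟩; exact ⟨h1, h2⟩
      · rintro ⟨h1, h2⟩; exact ⟨h1, h2⟩
    have hcard : Nat.card {v : Fin (3*t+1) //
        v ≠ 0 ∧ x.symm (Sum.inl v) < x.symm (Sum.inl 0)} = (beforeSet x).card := by
      rw [Nat.card_eq_fintype_card, Fintype.card_subtype, hset]
    rw [hcard, hbc, hhub]
    omega


end ConsCost
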